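/- Let G = (V,E) be a finite simple graph, u ∈ V, and A, B ⊆ N_G(u) with A ∪ B = N_G(u). Let G′ be the split of G at u along (A,B). If 𝒞′ is a sigma uniform clique cover of G′, then there exists a sigma uniform clique cover 𝒞 of G with wgt(𝒞) = wgt(𝒞′). -/

import Mathlib

namespace Paper

/-- A sigma `s`-clique cover of `G`: a multiset of vertex sets, each inducing a clique on
exactly `s` vertices, such that every edge of `G` has both endpoints in some member. -/
def IsSigmaCliqueCover {V : Type*} (G : SimpleGraph V) (s : ℕ)
    (C : Multiset (Finset V)) : Prop :=
  (∀ Q ∈ C, G.IsClique (Q : Set V) ∧ Q.card = s) ∧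
  (∀ x y : V, G.Adj x y → ∃ Q ∈ C, x ∈ Q ∧ y ∈ Q)

/-- A sigma uniform clique cover of `G`: a multiset of vertex sets, each inducing a clique,
all of the same cardinality, such that every edge of `G` has both endpoints in some member. -/
def IsSigmaUniformCover {V : Type*} (G : SimpleGraph V) (C : Multiset (Finset V)) : Prop :=
  (∀ Q ∈ C, G.IsClique (Q : Set V)) ∧
  (∃ s : ℕ, ∀ Q ∈ C, Q.card = s) ∧
  (∀ x y : V, G.Adj x y → ∃ Q ∈ C, x ∈ Q ∧ y ∈ Q)

/-- `freq_𝒞(v)`: the number of members of `𝒞` containing `v` (with multiplicity). -/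
def freqC {V : Type*} [DecidableEq V] (C : Multiset (Finset V)) (v : V) : ℕ :=
  (C.filter fun Q => v ∈ Q).card

/-- `cost(𝒞) = Σ_v max(0, freq_𝒞(v) - 1)`. -/
def costC {V : Type*} [Fintype V] [DecidableEq V] (C : Multiset (Finset V)) : ℕ :=
  ∑ v : V, (freqC C v - 1)

/-- `wgt(𝒞) = Σ_v freq_𝒞(v)`. -/
def wgt {V : Type*} [Fintype V] [DecidableEq V] (C : Multiset (Finset V)) : ℕ :=
  ∑ v : V, freqC C v

/-- The vertex set of the connected component of `v` in `G`. -/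
def compSet {V : Type*} (G : SimpleGraph V) (v : V) : Set V := {w | G.Reachable v w}

/-- A cluster graph: no induced `P₃`; equivalently, every connected component induces a clique. -/
def IsClusterGraph {V : Type*} (G : SimpleGraph V) : Prop :=
  ∀ ⦃x y z : V⦄, G.Adj x y → G.Adj y z → x ≠ z → G.Adj x z

/-- A uniform cluster graph: every connected component induces a clique and all connected
components have the same number of vertices. -/
def IsUniformCluster {V : Type*} (G : SimpleGraph V) : Prop :=
  IsClusterGraph G ∧ ∀ v w : V, (compSet G v).ncard = (compSet G w).ncard

/-- The split of `G` at `u` along `(A, B)`: a fresh vertex `none` is added; the copy `u`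
keeps exactly the neighbors in `A`, the new copy `none` gets exactly the neighbors in `B`,
the two copies are non-adjacent, and all other adjacencies are unchanged. -/
def splitGraph {V : Type*} (G : SimpleGraph V) (u : V) (A B : Set V) :
    SimpleGraph (Option V) where
  Adj x y :=
    match x, y with
    | some a, some b =>
        (a ≠ u ∧ b ≠ u ∧ G.Adj a b) ∨ (a = u ∧ b ≠ u ∧ b ∈ A) ∨ (b = u ∧ a ≠ u ∧ a ∈ A)
    | some a, none => a ≠ u ∧ a ∈ B
    | none, some b => b ≠ u ∧ b ∈ B
    | none, none => False
  symm := by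
    refine ⟨?_⟩
    rintro (_ | a) (_ | b) h
    · exact h
    · exact h
    · exact h
    · rcases h with ⟨h1, h2, h3⟩ | ⟨h1, h2, h3⟩ | ⟨h1, h2, h3⟩
      · exact Or.inl ⟨h2, h1, h3.symm⟩
      · exact Or.inr (Or.inr ⟨h1, h2, h3⟩)
      · exact Or.inr (Or.inl ⟨h1, h2, h3⟩)
  loopless := by
    refine ⟨?_⟩
    rintro (_ | a) h
    · exact h
    · rcases h with ⟨_, _, h3⟩ | ⟨h1, h2, _⟩ | ⟨h1, h2, _⟩
      · exact G.ne_of_adj h3 rfl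
      · exact h2 h1
      · exact h2 h1

lemma countP_or_of_disjoint {α : Type*} (p q : α → Prop) [DecidablePred p] [DecidablePred q]
    (s : Multiset α) (h : ∀ a ∈ s, ¬ (p a ∧ q a)) :
    Multiset.countP (fun a => p a ∨ q a) s = Multiset.countP p s + Multiset.countP q s := by
  induction s using Multiset.induction with
  | empty => simp
  | cons a s ih =>
    have ha := h a (Multiset.mem_cons_self a s)
    have ih' := ih (fun b hb => h b (Multiset.mem_cons_of_mem hb))
    by_cases hp : p a
    · by_cases hq : q a
      · exact absurd ⟨hp, hq⟩ ha
      · simp [Multiset.countP_cons, hp, hq, ih']; omega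
    · by_cases hq : q a <;> simp [Multiset.countP_cons, hp, hq, ih'] <;> omega

/-- If `G'` is the split of `G` at `u` along `(A, B)` and `C'` is a sigma uniform clique
cover of `G'`, then `G` has a sigma uniform clique cover of the same weight. -/
theorem stmt12 {V : Type*} [Fintype V] [DecidableEq V] (G : SimpleGraph V) (u : V)
    (A B : Set V) (hA : A ⊆ G.neighborSet u) (hB : B ⊆ G.neighborSet u)
    (hAB : A ∪ B = G.neighborSet u)
    (C' : Multiset (Finset (Option V)))
    (hC' : IsSigmaUniformCover (splitGraph G u A B) C') :
    ∃ C : Multiset (Finset V), IsSigmaUniformCover G C ∧ wgt C = wgt C' := by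
  classical
  set f : Option V → V := fun o => o.getD u with hf
  obtain ⟨hclq, ⟨s, hcard⟩, hcov⟩ := hC'
  -- no member contains both `some u` and `none`
  have not_both : ∀ Q ∈ C', ¬ (some u ∈ Q ∧ none ∈ Q) := by
    rintro Q hQ ⟨h1, h2⟩
    have := hclq Q hQ h1 h2 (by simp)
    simp [splitGraph] at this
  refine ⟨C'.map (fun Q => Q.image f), ⟨?_, ⟨s, ?_⟩, ?_⟩, ?_⟩
  · -- cliques
    intro Q hQ
    obtain ⟨Q', hQ', rfl⟩ := Multiset.mem_map.mp hQ
    intro x hx y hy hxy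
    obtain ⟨a, ha, rfl⟩ := Finset.mem_image.mp hx
    obtain ⟨b, hb, rfl⟩ := Finset.mem_image.mp hy
    have hab : a ≠ b := fun h => hxy (by rw [h])
    have hadj := hclq Q' hQ' ha hb hab
    match a, b with
    | some a', some b' =>
      rcases hadj with ⟨_, _, h3⟩ | ⟨h1, _, h3⟩ | ⟨h1, _, h3⟩
      · exact h3
      · subst h1; exact hA h3
      · subst h1; exact (hA h3).symm
    | some a', none => exact (hB hadj.2).symm
    | none, some b' => exact hB hadj.2
    | none, none => exact absurd rfl hab
  · -- cardinality
    intro Q hQ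
    obtain ⟨Q', hQ', rfl⟩ := Multiset.mem_map.mp hQ
    rw [Finset.card_image_of_injOn, hcard Q' hQ']
    rintro a ha b hb hfab
    match a, b with
    | some a', some b' => simpa [hf] using hfab
    | some a', none =>
      simp only [hf, Option.getD_some, Option.getD_none] at hfab
      subst hfab; exact absurd ⟨ha, hb⟩ (not_both Q' hQ')
    | none, some b' =>
      simp only [hf, Option.getD_some, Option.getD_none] at hfab
      rw [← hfab] at hb; exact absurd ⟨hb, ha⟩ (not_both Q' hQ')
    | none, none => rfl
  · -- cover
    intro x y hxy
    have hne : x ≠ y := G.ne_of_adj hxy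
    have key : ∀ a b : Option V, (splitGraph G u A B).Adj a b → f a = x → f b = y →
        ∃ Q ∈ C'.map (fun Q => Q.image f), x ∈ Q ∧ y ∈ Q := by
      intro a b hadj hfa hfb
      obtain ⟨Q', hQ', ha, hb⟩ := hcov a b hadj
      exact ⟨Q'.image f, Multiset.mem_map_of_mem _ hQ',
        hfa ▸ Finset.mem_image_of_mem f ha, hfb ▸ Finset.mem_image_of_mem f hb⟩
    by_cases hxu : x = u
    · have hyu : y ≠ u := fun h => hne (hxu.trans h.symm)
      have hyN : y ∈ A ∪ B := hAB ▸ (hxu ▸ hxy)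
      rcases hyN with hyA | hyB
      · exact key (some x) (some y) (Or.inr (Or.inl ⟨hxu, hyu, hyA⟩)) rfl rfl
      · exact key none (some y) ⟨hyu, hyB⟩ hxu.symm rfl
    · by_cases hyu : y = u
      · have hxN : x ∈ A ∪ B := hAB ▸ (hyu ▸ hxy.symm)
        rcases hxN with hxA | hxB
        · exact key (some x) (some y) (Or.inr (Or.inr ⟨hyu, hxu, hxA⟩)) rfl rfl
        · exact key (some x) none ⟨hxu, hxB⟩ rfl hyu.symm
      · exact key (some x) (some y) (Or.inl ⟨hxu, hyu, hxy⟩) rfl rfl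
  · -- weight
    have freq_eq : ∀ v : V, v ≠ u →
        freqC (C'.map (fun Q => Q.image f)) v = freqC C' (some v) := by
      intro v hv
      simp only [freqC, ← Multiset.countP_eq_card_filter, Multiset.countP_map]
      apply Multiset.countP_congr rfl
      intro Q _
      simp only [Function.comp, Finset.mem_image]
      apply propext
      constructor
      · rintro ⟨a, ha, hfa⟩
        match a with
        | some a' => simp only [hf, Option.getD_some] at hfa; rwa [hfa] at ha
        | none => exact absurd hfa.symm hv
      · intro h; exact ⟨some v, h, rfl⟩
    have freq_u : freqC (C'.map (fun Q => Q.image f)) u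
        = freqC C' (some u) + freqC C' none := by
      simp only [freqC, ← Multiset.countP_eq_card_filter, Multiset.countP_map]
      have : Multiset.countP (fun Q : Finset (Option V) => u ∈ Q.image f) C'
          = Multiset.countP (fun Q => some u ∈ Q ∨ none ∈ Q) C' := by
        apply Multiset.countP_congr rfl
        intro Q _
        simp only [Finset.mem_image]
        apply propext
        constructor
        · rintro ⟨a, ha, hfa⟩
          match a with
          | some a' => simp only [hf, Option.getD_some] at hfa; left; rwa [hfa] at ha
          | none => right; exact ha
        · rintro (h | h)
          · exact ⟨some u, h, rfl⟩
          · exact ⟨none, h, rfl⟩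
      rw [this, countP_or_of_disjoint _ _ _ not_both]
    simp only [wgt]
    rw [Fintype.sum_option (fun x : Option V => freqC C' x)]
    rw [← Finset.add_sum_erase Finset.univ _ (Finset.mem_univ u),
        ← Finset.add_sum_erase Finset.univ (fun v => freqC C' (some v)) (Finset.mem_univ u)]
    rw [freq_u]
    have : ∑ v ∈ Finset.univ.erase u, freqC (C'.map (fun Q => Q.image f)) v
        = ∑ v ∈ Finset.univ.erase u, freqC C' (some v) := by
      apply Finset.sum_congr rfl
      intro v hv
      exact freq_eq v (Finset.ne_of_mem_erase hv)
    rw [this]; ring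

end Paper
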